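/- Let (Ω, F₂, P) be a probability space and F₁ ⊂ F₂ a sub-σ-algebra. If there exists an atomless sub-σ-algebra B ⊂ F₂ that is independent of F₁, then F₂ is atomless conditionally to F₁. -/

import Mathlib

open MeasureTheory

/-- `F₂` is atomless conditionally to `F₁`: for every `A ∈ F₂` there is `B ∈ F₂`, `B ⊆ A`,
with `0 < E[1_B | F₁] < E[1_A | F₁]` almost surely on the set `{E[1_A | F₁] > 0}`. -/
def CondAtomless {Ω : Type*} (m1 m2 : MeasurableSpace Ω) (μ : @Measure Ω m2) : Prop :=
  ∀ A : Set Ω, MeasurableSet[m2] A →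
    ∃ B : Set Ω, MeasurableSet[m2] B ∧ B ⊆ A ∧
      ∀ᵐ ω ∂μ, 0 < (μ[A.indicator (fun _ => (1 : ℝ)) | m1]) ω →
        0 < (μ[B.indicator (fun _ => (1 : ℝ)) | m1]) ω ∧
        (μ[B.indicator (fun _ => (1 : ℝ)) | m1]) ω <
          (μ[A.indicator (fun _ => (1 : ℝ)) | m1]) ω

/-- A sub-σ-algebra `B` is atomless for `μ`: every `B`-measurable set of positive measure
contains a `B`-measurable subset of strictly smaller positive measure. -/
def SubSigmaAlgebraAtomless {Ω : Type*} (mB : MeasurableSpace Ω) {m2 : MeasurableSpace Ω}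
    (μ : Measure Ω) : Prop :=
  ∀ B : Set Ω, MeasurableSet[mB] B → 0 < μ B →
    ∃ B' : Set Ω, MeasurableSet[mB] B' ∧ B' ⊆ B ∧ 0 < μ B' ∧ μ B' < μ B

open Set Filter Topology ENNReal in
/-- From atomlessness: every positive-measure `mB`-set contains an `mB`-subset of
positive measure at most `ε`. -/
lemma small_subset_of_atomless {Ω : Type*} {m2 mB : MeasurableSpace Ω} {μ : @Measure Ω m2}
    [IsFiniteMeasure μ] (hmB : mB ≤ m2) (hatomless : SubSigmaAlgebraAtomless mB μ) :
    ∀ R : Set Ω, MeasurableSet[mB] R → 0 < μ R → ∀ ε : ℝ≥0∞, 0 < ε →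
      ∃ D : Set Ω, MeasurableSet[mB] D ∧ D ⊆ R ∧ 0 < μ D ∧ μ D ≤ ε := by
  have halve : ∀ R : Set Ω, MeasurableSet[mB] R → 0 < μ R →
      ∃ D : Set Ω, MeasurableSet[mB] D ∧ D ⊆ R ∧ 0 < μ D ∧ 2 * μ D ≤ μ R := by
    intro R hR hpos
    obtain ⟨B', hB', hsub, hpos', hlt⟩ := hatomless R hR hpos
    by_cases hle : 2 * μ B' ≤ μ R
    · exact ⟨B', hB', hsub, hpos', hle⟩
    · have hdiff : μ (R \ B') = μ R - μ B' :=
        measure_diff hsub (hmB _ hB').nullMeasurableSet (measure_ne_top μ B')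
      have h2 : μ R ≤ μ B' + μ B' := by
        by_contra hc
        push_neg at hc
        exact hle (by rw [two_mul]; exact hc.le)
      refine ⟨R \ B', hR.diff hB', diff_subset, ?_, ?_⟩
      · rw [hdiff]
        exact tsub_pos_iff_lt.mpr hlt
      · rw [hdiff, two_mul]
        have h3 : μ R - μ B' ≤ μ B' := tsub_le_iff_right.mpr h2
        calc μ R - μ B' + (μ R - μ B') ≤ (μ R - μ B') + μ B' := add_le_add le_rfl h3
          _ = μ R := tsub_add_cancel_of_le hlt.le
  have iter : ∀ n : ℕ, ∀ R : Set Ω, MeasurableSet[mB] R → 0 < μ R →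
      ∃ D : Set Ω, MeasurableSet[mB] D ∧ D ⊆ R ∧ 0 < μ D ∧ 2 ^ n * μ D ≤ μ R := by
    intro n
    induction n with
    | zero => intro R hR hpos; exact ⟨R, hR, subset_rfl, hpos, by simp⟩
    | succ n ih =>
      intro R hR hpos
      obtain ⟨D, hD, hDsub, hDpos, hDle⟩ := ih R hR hpos
      obtain ⟨D', hD', hD'sub, hD'pos, hD'le⟩ := halve D hD hDpos
      refine ⟨D', hD', hD'sub.trans hDsub, hD'pos, ?_⟩
      calc 2 ^ (n + 1) * μ D' = 2 ^ n * (2 * μ D') := by ring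
        _ ≤ 2 ^ n * μ D := mul_le_mul' le_rfl hD'le
        _ ≤ μ R := hDle
  intro R hR hpos ε hε
  -- choose n with μ univ * 2⁻¹ ^ n ≤ ε
  have hμu : μ Set.univ ≠ ∞ := measure_ne_top μ _
  have hd : ε / (μ Set.univ + 1) ≠ 0 := by
    apply ENNReal.div_ne_zero.mpr
    exact ⟨hε.ne', by finiteness⟩
  obtain ⟨n, hn⟩ := ENNReal.exists_inv_two_pow_lt hd
  obtain ⟨D, hD, hDsub, hDpos, hDle⟩ := iter n R hR hpos
  refine ⟨D, hD, hDsub, hDpos, ?_⟩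
  have h1 : μ D ≤ μ Set.univ * 2⁻¹ ^ n := by
    have h2 : μ D * 2 ^ n ≤ μ Set.univ := le_trans (by rw [mul_comm]; exact hDle)
      (measure_mono (Set.subset_univ R))
    have h3 : μ D ≤ μ Set.univ / 2 ^ n :=
      (ENNReal.le_div_iff_mul_le (Or.inl (by positivity)) (Or.inl (ENNReal.pow_ne_top (by norm_num)))).mpr h2
    rwa [div_eq_mul_inv, ENNReal.inv_pow] at h3
  calc μ D ≤ μ Set.univ * 2⁻¹ ^ n := h1
    _ ≤ (μ Set.univ + 1) * (ε / (μ Set.univ + 1)) := by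
        exact mul_le_mul' le_self_add hn.le
    _ = ε := ENNReal.mul_div_cancel' (by simp) (fun h => absurd h (by finiteness))

open Set Filter Topology ENNReal in
/-- From atomlessness: for every `ε > 0` there is an increasing chain of `mB`-sets starting
at `∅`, with increments of measure at most `ε`, whose complements have measure tending to `0`. -/
lemma chain_of_atomless {Ω : Type*} {m2 mB : MeasurableSpace Ω} {μ : @Measure Ω m2}
    [IsProbabilityMeasure μ] (hmB : mB ≤ m2) (hatomless : SubSigmaAlgebraAtomless mB μ)
    (ε : ℝ≥0∞) (hε : 0 < ε) :
    ∃ C : ℕ → Set Ω, (∀ j, MeasurableSet[mB] (C j)) ∧ Monotone C ∧ C 0 = ∅ ∧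
      (∀ j, μ (C (j + 1) \ C j) ≤ ε) ∧
      Tendsto (fun j => μ (C j)ᶜ) atTop (𝓝 0) := by
  classical
  -- the supremum of measures of admissible subsets of R
  set s : Set Ω → ℝ≥0∞ := fun R =>
    ⨆ (D : {D : Set Ω // MeasurableSet[mB] D ∧ D ⊆ R ∧ μ D ≤ ε}), μ D.1 with hs_def
  have hs_fin : ∀ R, s R ≤ 1 := by
    intro R
    refine iSup_le fun D => ?_
    calc μ D.1 ≤ μ Set.univ := measure_mono (Set.subset_univ _)
      _ = 1 := measure_univ
  have pickable : ∀ R : Set Ω, MeasurableSet[mB] R →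
      ∃ D : Set Ω, MeasurableSet[mB] D ∧ D ⊆ R ∧ μ D ≤ ε ∧ s R ≤ 2 * μ D := by
    intro R hR
    by_cases h0 : s R = 0
    · exact ⟨∅, MeasurableSet.empty, Set.empty_subset _, by simp, by simp [h0]⟩
    · have hlt : s R / 2 < s R :=
        ENNReal.half_lt_self h0 (lt_of_le_of_lt (hs_fin R) one_lt_top).ne
      rw [hs_def] at hlt
      obtain ⟨D, hD⟩ := lt_iSup_iff.mp hlt
      refine ⟨D.1, D.2.1, D.2.2.1, D.2.2.2, ?_⟩
      have : s R / 2 ≤ μ D.1 := hD.le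
      calc s R = 2 * (s R / 2) := (ENNReal.mul_div_cancel' (by norm_num) (by norm_num)).symm
        _ ≤ 2 * μ D.1 := mul_le_mul' le_rfl this
  choose pick hpick_meas hpick_sub hpick_le hpick_sup using pickable
  -- the recursive remainder sequence
  let Rs : ℕ → {S : Set Ω // MeasurableSet[mB] S} := fun n =>
    Nat.rec ⟨Set.univ, MeasurableSet.univ⟩
      (fun _ p => ⟨p.1 \ pick p.1 p.2, p.2.diff (hpick_meas p.1 p.2)⟩) n
  have hRsucc : ∀ n, (Rs (n + 1)).1 = (Rs n).1 \ pick (Rs n).1 (Rs n).2 := fun n => rfl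
  have hR0 : (Rs 0).1 = Set.univ := rfl
  have hRanti : Antitone fun n => (Rs n).1 := by
    apply antitone_nat_of_succ_le
    intro n
    rw [hRsucc]
    exact diff_subset
  have hRm2 : ∀ n, MeasurableSet[m2] (Rs n).1 := fun n => hmB _ (Rs n).2
  have hRtend : Tendsto (fun n => μ (Rs n).1) atTop (𝓝 (μ (⋂ n, (Rs n).1))) :=
    tendsto_measure_iInter_atTop (fun n => (hRm2 n).nullMeasurableSet) hRanti
      ⟨0, measure_ne_top μ _⟩
  -- the intersection is null
  have hInull : μ (⋂ n, (Rs n).1) = 0 := by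
    by_contra hne
    have hpos : 0 < μ (⋂ n, (Rs n).1) := pos_iff_ne_zero.mpr hne
    obtain ⟨D, hD, hDsub, hDpos, hDle⟩ := small_subset_of_atomless hmB hatomless
      (⋂ n, (Rs n).1) (MeasurableSet.iInter fun n => (Rs n).2) hpos ε hε
    -- μ D ≤ 2 * μ (pick n) for every n
    have hDlow : ∀ n, μ D ≤ 2 * μ (pick (Rs n).1 (Rs n).2) := by
      intro n
      refine le_trans ?_ (hpick_sup (Rs n).1 (Rs n).2)
      have : μ D ≤ s (Rs n).1 := by
        have hmem : D ⊆ (Rs n).1 := hDsub.trans (Set.iInter_subset _ n)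
        exact le_iSup (fun (D' : {D' : Set Ω // MeasurableSet[mB] D' ∧ D' ⊆ (Rs n).1 ∧ μ D' ≤ ε})
          => μ D'.1) ⟨D, hD, hmem, hDle⟩
      exact this
    -- but μ (pick n) → 0
    have hpick_eq : ∀ n, μ (pick (Rs n).1 (Rs n).2) = μ (Rs n).1 - μ (Rs (n + 1)).1 := by
      intro n
      rw [hRsucc n, measure_diff (hpick_sub _ (Rs n).2)
        ((hmB _ (hpick_meas _ (Rs n).2)).nullMeasurableSet) (measure_ne_top μ _)]
      have hle : μ (pick (Rs n).1 (Rs n).2) ≤ μ (Rs n).1 :=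
        measure_mono (hpick_sub _ (Rs n).2)
      rw [ENNReal.sub_sub_cancel (measure_ne_top μ _) hle]
    have hpick_tend : Tendsto (fun n => μ (pick (Rs n).1 (Rs n).2)) atTop (𝓝 0) := by
      have h1 : Tendsto (fun n => μ (Rs (n + 1)).1) atTop (𝓝 (μ (⋂ n, (Rs n).1))) :=
        hRtend.comp (tendsto_add_atTop_nat 1)
      have h2 : Tendsto (fun n => μ (Rs n).1 - μ (Rs (n + 1)).1) atTop
          (𝓝 (μ (⋂ n, (Rs n).1) - μ (⋂ n, (Rs n).1))) :=
        ENNReal.Tendsto.sub hRtend h1 (Or.inl (measure_ne_top μ _))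
      simp only [tsub_self] at h2
      simpa only [hpick_eq] using h2
    have hev : ∀ᶠ n in atTop, μ (pick (Rs n).1 (Rs n).2) < μ D / 2 :=
      hpick_tend.eventually (gt_mem_nhds (ENNReal.div_pos hDpos.ne' (by norm_num)))
    obtain ⟨n, hn⟩ := hev.exists
    have : μ D / 2 ≤ μ (pick (Rs n).1 (Rs n).2) := by
      rw [ENNReal.div_le_iff_le_mul (Or.inl (by norm_num)) (Or.inl (by norm_num))]
      rw [mul_comm]
      exact hDlow n
    exact absurd this (not_le.mpr hn)
  refine ⟨fun j => ((Rs j).1)ᶜ, fun j => (Rs j).2.compl, ?_, by simp [hR0], ?_, ?_⟩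
  · intro i j hij
    exact Set.compl_subset_compl.mpr (hRanti hij)
  · intro j
    have hsub : ((Rs (j + 1)).1)ᶜ \ ((Rs j).1)ᶜ ⊆ pick (Rs j).1 (Rs j).2 := by
      intro ω hω
      have h1 : ω ∉ (Rs (j + 1)).1 := hω.1
      have h2 : ω ∈ (Rs j).1 := by simpa using hω.2
      rw [hRsucc] at h1
      by_contra hc
      exact h1 ⟨h2, hc⟩
    exact le_trans (measure_mono hsub) (hpick_le _ (Rs j).2)
  · simp only [compl_compl]
    rwa [hInull] at hRtend


open Set Filter Topology in
private lemma aux_indicator_integrable {Ω : Type*} {m2 : MeasurableSpace Ω}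
    (μ : @Measure Ω m2) [IsFiniteMeasure μ] {S : Set Ω} (hS : MeasurableSet[m2] S) :
    Integrable (S.indicator fun _ => (1 : ℝ)) μ :=
  (integrable_const (1 : ℝ)).indicator hS

open Set Filter Topology in
private lemma aux_integral_indicator {Ω : Type*} {m2 : MeasurableSpace Ω}
    (μ : @Measure Ω m2) {S : Set Ω} (hS : MeasurableSet[m2] S) :
    ∫ ω, S.indicator (fun _ => (1 : ℝ)) ω ∂μ = (μ S).toReal := by
  rw [integral_indicator_const (1 : ℝ) hS, smul_eq_mul, mul_one, measureReal_def]

private lemma aux_measurableSet_le {Ω : Type*} {m1 : MeasurableSpace Ω} {f g : Ω → ℝ}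
    (hf : Measurable[m1] f) (hg : Measurable[m1] g) :
    MeasurableSet[m1] {ω | f ω ≤ g ω} := measurableSet_le hf hg

private lemma aux_measurableSet_lt {Ω : Type*} {m1 : MeasurableSpace Ω} {f g : Ω → ℝ}
    (hf : Measurable[m1] f) (hg : Measurable[m1] g) :
    MeasurableSet[m1] {ω | f ω < g ω} := measurableSet_lt hf hg

private lemma aux_const_mul {Ω : Type*} {m1 : MeasurableSpace Ω} {f : Ω → ℝ}
    (hf : Measurable[m1] f) (c : ℝ) : Measurable[m1] (fun ω => c * f ω) :=
  hf.const_mul c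

private lemma aux_measurable_const {Ω : Type*} {m1 : MeasurableSpace Ω} (c : ℝ) :
    Measurable[m1] (fun _ : Ω => c) := measurable_const

open Set Filter Topology ENNReal in
/-- If there exists an atomless sub-σ-algebra `B ⊆ F₂` that is independent of `F₁`,
then `F₂` is atomless conditionally to `F₁`. -/
theorem stmt_3 {Ω : Type*} {m1 m2 : MeasurableSpace Ω} (hm : m1 ≤ m2)
    (μ : @Measure Ω m2) [IsProbabilityMeasure μ] (mB : MeasurableSpace Ω)
    (hmB : mB ≤ m2) (hatomless : SubSigmaAlgebraAtomless mB μ)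
    (hindep : ProbabilityTheory.Indep mB m1 μ) :
    CondAtomless m1 m2 μ := by
  classical
  haveI : SigmaFinite (μ.trim hm) := inferInstance
  intro A hA
  have hint : ∀ S : Set Ω, MeasurableSet[m2] S →
      Integrable (S.indicator fun _ => (1 : ℝ)) μ :=
    fun S hS => aux_indicator_integrable μ hS
  set g : Ω → ℝ := μ[A.indicator (fun _ => (1 : ℝ)) | m1] with hg_def
  have hg_meas : Measurable[m1] g := stronglyMeasurable_condExp.measurable
  -- the scales
  set c : ℕ → ℝ := fun n => (1 / 2 : ℝ) ^ (n + 1) with hc_def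
  have hc_pos : ∀ n, 0 < c n := fun n => by positivity
  -- chains at each scale
  have hchain : ∀ n : ℕ, ∃ C : ℕ → Set Ω, (∀ j, MeasurableSet[mB] (C j)) ∧ Monotone C ∧
      C 0 = ∅ ∧ (∀ j, μ (C (j + 1) \ C j) ≤ ENNReal.ofReal (c n / 4)) ∧
      Tendsto (fun j => μ (C j)ᶜ) atTop (𝓝 0) :=
    fun n => chain_of_atomless hmB hatomless _ (ENNReal.ofReal_pos.mpr (div_pos (hc_pos n) (by norm_num)))
  choose C hCmeas hCmono hC0 hCinc hCtend using hchain
  -- conditional expectations along the chains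
  set h : ℕ → ℕ → Ω → ℝ :=
    fun n k => μ[(A ∩ C n k).indicator (fun _ => (1 : ℝ)) | m1] with hh_def
  have hh_meas : ∀ n k, Measurable[m1] (h n k) :=
    fun n k => stronglyMeasurable_condExp.measurable
  -- the stopping sets and the layers
  set T : ℕ → ℕ → Set Ω := fun n k =>
    {ω | g ω ≤ 2 * h n k ω} ∩ ⋂ (i : ℕ) (_ : i < k), {ω | 2 * h n i ω < g ω} with hT_def
  set S : ℕ → Set Ω := fun n =>
    {ω | c n < g ω} ∩ ⋂ (m : ℕ) (_ : m < n), {ω | ¬ c m < g ω} with hS_def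
  have hT_meas : ∀ n k, MeasurableSet[m1] (T n k) := by
    intro n k
    refine MeasurableSet.inter ?_ (MeasurableSet.iInter fun i => MeasurableSet.iInter fun _ => ?_)
    · exact aux_measurableSet_le hg_meas (aux_const_mul (hh_meas n k) 2)
    · exact aux_measurableSet_lt (aux_const_mul (hh_meas n i) 2) hg_meas
  have hS_meas : ∀ n, MeasurableSet[m1] (S n) := by
    intro n
    refine MeasurableSet.inter ?_ (MeasurableSet.iInter fun m => MeasurableSet.iInter fun _ => ?_)
    · exact aux_measurableSet_lt (aux_measurable_const (c n)) hg_meas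
    · exact (aux_measurableSet_lt (aux_measurable_const (c m)) hg_meas).compl
  -- membership unfolding
  have hT_mem : ∀ n k ω, ω ∈ T n k ↔ (g ω ≤ 2 * h n k ω ∧ ∀ i < k, 2 * h n i ω < g ω) := by
    intro n k ω
    simp [hT_def, Set.mem_iInter]
  have hS_mem : ∀ n ω, ω ∈ S n ↔ (c n < g ω ∧ ∀ m < n, ¬ c m < g ω) := by
    intro n ω
    simp [hS_def, Set.mem_iInter]
  -- T is pairwise disjoint in k, S pairwise disjoint in n
  have hT_disj : ∀ n k k' ω, ω ∈ T n k → ω ∈ T n k' → k = k' := by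
    intro n k k' ω hk hk'
    rw [hT_mem] at hk hk'
    by_contra hne
    rcases Nat.lt_or_ge k k' with hlt | hge
    · exact absurd hk.1 (not_le.mpr (hk'.2 k hlt))
    · exact absurd hk'.1 (not_le.mpr (hk.2 k' (lt_of_le_of_ne hge (Ne.symm hne))))
  have hS_disj : ∀ n n' ω, ω ∈ S n → ω ∈ S n' → n = n' := by
    intro n n' ω hn hn'
    rw [hS_mem] at hn hn'
    by_contra hne
    rcases Nat.lt_or_ge n n' with hlt | hge
    · exact (hn'.2 n hlt) hn.1
    · exact (hn.2 n' (lt_of_le_of_ne hge (Ne.symm hne))) hn'.1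
  -- the candidate set
  set B : Set Ω := ⋃ (n : ℕ) (k : ℕ), A ∩ C n k ∩ (T n k ∩ S n) with hB_def
  have hB_meas : MeasurableSet[m2] B := by
    refine MeasurableSet.iUnion fun n => MeasurableSet.iUnion fun k => ?_
    exact ((hA.inter (hmB _ (hCmeas n k))).inter
      ((hm _ (hT_meas n k)).inter (hm _ (hS_meas n))))
  have hB_sub : B ⊆ A := by
    refine Set.iUnion_subset fun n => Set.iUnion_subset fun k => ?_
    exact fun ω hω => hω.1.1
  -- key set identity
  have hBU : ∀ n k, B ∩ (T n k ∩ S n) = (A ∩ C n k) ∩ (T n k ∩ S n) := by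
    intro n k
    ext ω
    constructor
    · rintro ⟨hωB, hωU⟩
      simp only [hB_def, Set.mem_iUnion] at hωB
      obtain ⟨n', k', hω⟩ := hωB
      have hn : n' = n := hS_disj n' n ω hω.2.2 hωU.2
      subst hn
      have hk : k' = k := hT_disj n' k' k ω hω.2.1 hωU.1
      subst hk
      exact ⟨hω.1, hωU⟩
    · rintro ⟨hωAC, hωU⟩
      refine ⟨?_, hωU⟩
      simp only [hB_def, Set.mem_iUnion]
      exact ⟨n, k, hωAC, hωU⟩
  -- E1 : on T n k ∩ S n, E[1_B | m1] = h n k a.e.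
  have E1 : ∀ n k, ∀ᵐ ω ∂μ, ω ∈ T n k ∩ S n →
      (μ[B.indicator (fun _ => (1 : ℝ)) | m1]) ω = h n k ω := by
    intro n k
    set U : Set Ω := T n k ∩ S n with hU_def
    have hU_m1 : MeasurableSet[m1] U := (hT_meas n k).inter (hS_meas n)
    have h1 := condExp_indicator (μ := μ) (hint B hB_meas) hU_m1
    have h2 := condExp_indicator (μ := μ)
      (hint (A ∩ C n k) (hA.inter (hmB _ (hCmeas n k)))) hU_m1
    have hiden : U.indicator (B.indicator (fun _ => (1 : ℝ))) =
        U.indicator ((A ∩ C n k).indicator (fun _ => (1 : ℝ))) := by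
      rw [Set.indicator_indicator, Set.indicator_indicator, Set.inter_comm U B,
        Set.inter_comm U (A ∩ C n k), hBU n k]
    rw [hiden] at h1
    filter_upwards [h1, h2] with ω hω1 hω2 hωU
    have e1 : U.indicator (μ[B.indicator (fun _ => (1 : ℝ)) | m1]) ω =
        (μ[B.indicator (fun _ => (1 : ℝ)) | m1]) ω := Set.indicator_of_mem hωU _
    have e2 : U.indicator (μ[(A ∩ C n k).indicator (fun _ => (1 : ℝ)) | m1]) ω =
        h n k ω := Set.indicator_of_mem hωU _
    rw [← e1, ← hω1, hω2, e2]
  -- E2 : increments are small a.e.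
  have E2 : ∀ n k, ∀ᵐ ω ∂μ, h n (k + 1) ω ≤ h n k ω + c n / 4 := by
    intro n k
    have hsub : A ∩ C n k ⊆ A ∩ C n (k + 1) :=
      Set.inter_subset_inter_right A (hCmono n (Nat.le_succ k))
    have hdiffsub : (A ∩ C n (k + 1)) \ (A ∩ C n k) ⊆ C n (k + 1) \ C n k := by
      rintro ω ⟨⟨hωA, hωC⟩, hω2⟩
      exact ⟨hωC, fun hc => hω2 ⟨hωA, hc⟩⟩
    have hDm : MeasurableSet[mB] (C n (k + 1) \ C n k) :=
      (hCmeas n (k + 1)).diff (hCmeas n k)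
    have hstep1 : ((A ∩ C n (k + 1)) \ (A ∩ C n k)).indicator (fun _ => (1 : ℝ)) =
        (A ∩ C n (k + 1)).indicator (fun _ => (1 : ℝ)) -
          (A ∩ C n k).indicator (fun _ => (1 : ℝ)) :=
      Set.indicator_sdiff hsub _
    have hstep2 := condExp_sub (μ := μ) (m := m1)
      (hint _ (hA.inter (hmB _ (hCmeas n (k + 1))))) (hint _ (hA.inter (hmB _ (hCmeas n k))))
    rw [← hstep1] at hstep2
    have hstep3 : ((A ∩ C n (k + 1)) \ (A ∩ C n k)).indicator (fun _ => (1 : ℝ)) ≤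
        (C n (k + 1) \ C n k).indicator (fun _ => (1 : ℝ)) :=
      Set.indicator_le_indicator_of_subset hdiffsub (fun _ => zero_le_one)
    have hstep4 := condExp_mono (μ := μ) (m := m1)
      (hint _ (((hA.inter (hmB _ (hCmeas n (k + 1)))).diff (hA.inter (hmB _ (hCmeas n k))))))
      (hint _ (hmB _ hDm)) (Filter.Eventually.of_forall hstep3)
    have hstep5 := MeasureTheory.condExp_indep_eq hmB hm
      (stronglyMeasurable_const.indicator hDm :
        StronglyMeasurable[mB] ((C n (k + 1) \ C n k).indicator (fun _ => (1 : ℝ)))) hindep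
    have hstep6 : ∫ ω, (C n (k + 1) \ C n k).indicator (fun _ => (1 : ℝ)) ω ∂μ =
        (μ (C n (k + 1) \ C n k)).toReal := aux_integral_indicator μ (hmB _ hDm)
    have hstep7 : (μ (C n (k + 1) \ C n k)).toReal ≤ c n / 4 :=
      ENNReal.toReal_le_of_le_ofReal (by positivity) (hCinc n k)
    filter_upwards [hstep2, hstep4, hstep5] with ω hω2 hω4 hω5
    have : h n (k + 1) ω - h n k ω ≤ c n / 4 := by
      have e1 : (μ[(A ∩ C n (k + 1)).indicator (fun _ => (1 : ℝ)) | m1] -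
          μ[(A ∩ C n k).indicator (fun _ => (1 : ℝ)) | m1]) ω =
          h n (k + 1) ω - h n k ω := rfl
      rw [e1] at hω2
      rw [← hω2]
      calc (μ[((A ∩ C n (k + 1)) \ (A ∩ C n k)).indicator (fun _ => (1 : ℝ)) | m1]) ω
          ≤ (μ[(C n (k + 1) \ C n k).indicator (fun _ => (1 : ℝ)) | m1]) ω := hω4
        _ = ∫ ω, (C n (k + 1) \ C n k).indicator (fun _ => (1 : ℝ)) ω ∂μ := by rw [hω5]
        _ = (μ (C n (k + 1) \ C n k)).toReal := hstep6
        _ ≤ c n / 4 := hstep7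
    linarith
  -- E3 : g - h n k is bounded by the measure of the complement a.e.
  have E3 : ∀ n k, ∀ᵐ ω ∂μ, g ω ≤ h n k ω + (μ (C n k)ᶜ).toReal := by
    intro n k
    have hsub : A ∩ C n k ⊆ A := Set.inter_subset_left
    have hdiffsub : A \ (A ∩ C n k) ⊆ (C n k)ᶜ := by
      rintro ω ⟨hωA, hω2⟩
      exact fun hc => hω2 ⟨hωA, hc⟩
    have hDm : MeasurableSet[mB] (C n k)ᶜ := (hCmeas n k).compl
    have hstep1 : (A \ (A ∩ C n k)).indicator (fun _ => (1 : ℝ)) =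
        A.indicator (fun _ => (1 : ℝ)) - (A ∩ C n k).indicator (fun _ => (1 : ℝ)) :=
      Set.indicator_sdiff hsub _
    have hstep2 := condExp_sub (μ := μ) (m := m1)
      (hint _ hA) (hint _ (hA.inter (hmB _ (hCmeas n k))))
    rw [← hstep1] at hstep2
    have hstep3 : (A \ (A ∩ C n k)).indicator (fun _ => (1 : ℝ)) ≤
        ((C n k)ᶜ).indicator (fun _ => (1 : ℝ)) :=
      Set.indicator_le_indicator_of_subset hdiffsub (fun _ => zero_le_one)
    have hstep4 := condExp_mono (μ := μ) (m := m1)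
      (hint _ (hA.diff (hA.inter (hmB _ (hCmeas n k)))))
      (hint _ (hmB _ hDm)) (Filter.Eventually.of_forall hstep3)
    have hstep5 := MeasureTheory.condExp_indep_eq hmB hm
      (stronglyMeasurable_const.indicator hDm :
        StronglyMeasurable[mB] (((C n k)ᶜ).indicator (fun _ => (1 : ℝ)))) hindep
    have hstep6 : ∫ ω, ((C n k)ᶜ).indicator (fun _ => (1 : ℝ)) ω ∂μ =
        (μ (C n k)ᶜ).toReal := aux_integral_indicator μ (hmB _ hDm)
    filter_upwards [hstep2, hstep4, hstep5] with ω hω2 hω4 hω5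
    have e1 : (μ[A.indicator (fun _ => (1 : ℝ)) | m1] -
        μ[(A ∩ C n k).indicator (fun _ => (1 : ℝ)) | m1]) ω = g ω - h n k ω := rfl
    rw [e1] at hω2
    have : g ω - h n k ω ≤ (μ (C n k)ᶜ).toReal := by
      rw [← hω2]
      calc (μ[(A \ (A ∩ C n k)).indicator (fun _ => (1 : ℝ)) | m1]) ω
          ≤ (μ[((C n k)ᶜ).indicator (fun _ => (1 : ℝ)) | m1]) ω := hω4
        _ = ∫ ω, ((C n k)ᶜ).indicator (fun _ => (1 : ℝ)) ω ∂μ := by rw [hω5]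
        _ = (μ (C n k)ᶜ).toReal := hstep6
    linarith
  -- E4 : h n 0 = 0
  have E4 : ∀ n, h n 0 = 0 := by
    intro n
    rw [hh_def]
    simp only [hC0 n, Set.inter_empty, Set.indicator_empty]
    exact condExp_zero
  -- E6 : coverage, a.e. on S n there is a first crossing index
  have E6 : ∀ n, ∀ᵐ ω ∂μ, ω ∈ S n → ∃ k, ω ∈ T n k := by
    intro n
    filter_upwards [ae_all_iff.mpr (E3 n)] with ω hω3 hωS
    rw [hS_mem] at hωS
    have hgpos : 0 < g ω := lt_trans (hc_pos n) hωS.1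
    -- find some crossing index
    have hex : ∃ j, g ω ≤ 2 * h n j ω := by
      have htR : Tendsto (fun j => (μ (C n j)ᶜ).toReal) atTop (𝓝 0) := by
        have := (ENNReal.tendsto_toReal (by norm_num : (0 : ℝ≥0∞) ≠ ∞)).comp (hCtend n)
        exact this
      have hev : ∀ᶠ j in atTop, (μ (C n j)ᶜ).toReal < g ω / 2 :=
        htR.eventually (gt_mem_nhds (by linarith))
      obtain ⟨j, hj⟩ := hev.exists
      refine ⟨j, ?_⟩
      have := hω3 j
      linarith
    -- take the least one
    refine ⟨Nat.find hex, ?_⟩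
    rw [hT_mem]
    refine ⟨Nat.find_spec hex, fun i hi => ?_⟩
    have := Nat.find_min hex hi
    push_neg at this
    exact this
  -- assemble
  refine ⟨B, hB_meas, hB_sub, ?_⟩
  have hSex : ∀ ω, 0 < g ω → ∃ n, ω ∈ S n := by
    intro ω hgpos
    have hex : ∃ n, c n < g ω := by
      obtain ⟨n, hn⟩ := exists_pow_lt_of_lt_one hgpos (by norm_num : (1 / 2 : ℝ) < 1)
      refine ⟨n, lt_of_le_of_lt ?_ hn⟩
      rw [hc_def]
      exact pow_le_pow_of_le_one (by norm_num) (by norm_num) (Nat.le_succ n)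
    refine ⟨Nat.find hex, ?_⟩
    rw [hS_mem]
    exact ⟨Nat.find_spec hex, fun m hm' => Nat.find_min hex hm'⟩
  filter_upwards [ae_all_iff.mpr (fun n => ae_all_iff.mpr (E1 n)),
    ae_all_iff.mpr (fun n => ae_all_iff.mpr (E2 n)),
    ae_all_iff.mpr E6] with ω hE1 hE2 hE6 hgpos
  obtain ⟨n, hSn⟩ := hSex ω hgpos
  obtain ⟨k, hTk⟩ := hE6 n hSn
  have heq : (μ[B.indicator (fun _ => (1 : ℝ)) | m1]) ω = h n k ω := hE1 n k ⟨hTk, hSn⟩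
  have hcn : c n < g ω := ((hS_mem n ω).mp hSn).1
  have hTk' := (hT_mem n k ω).mp hTk
  constructor
  · rw [heq]
    linarith [hTk'.1]
  · rw [heq]
    -- k cannot be 0
    cases k with
    | zero =>
      exfalso
      have h0 : h n 0 ω = 0 := by rw [E4 n]; rfl
      have := hTk'.1
      rw [h0] at this
      linarith [hc_pos n]
    | succ k' =>
      have hlt : 2 * h n k' ω < g ω := hTk'.2 k' (Nat.lt_succ_self k')
      have hineq := hE2 n k'
      linarith [hc_pos n]
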